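/- Let d ≥ 2 and let ḡ = (g_1,…,g_n) be a tuple of transpositions in the symmetric group S_d with g_1 g_2 ⋯ g_n = 1 (the identity permutation). Then: (1) n is even, say n = 2n'; (2) ḡ is braid-equivalent to a tuple of the form (h_1,h_1,h_2,h_2,…,h_{n'},h_{n'}) for some transpositions h_1,…,h_{n'}; (3) the subgroup ⟨ḡ⟩ of S_d generated by g_1,…,g_n is exactly the set of permutations σ ∈ S_d such that σ(a) lies in the same connected component of 𝒢(ḡ) as a, for every a ∈ {1,…,d} (i.e., ⟨ḡ⟩ = Π_{Σ ∈ I(ḡ)} S_Σ); and (4) if ḡ' = (g'_1,…,g'_n) is another tuple of transpositions in S_d with product 1, then ḡ and ḡ' are braid-equivalent if and only if I(ḡ) = I(ḡ') and, for every block Σ of this partition, the number of indices i with g_i = (a b) for some a,b ∈ Σ equals the corresponding number for ḡ'. -/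

import Mathlib

open scoped Classical

/-- One Hurwitz braid move: replace adjacent entries `a, b` by `a*b*a⁻¹, a`. -/
inductive BraidMove (G : Type*) [Group G] : List G → List G → Prop
  | mk (l₁ l₂ : List G) (a b : G) :
      BraidMove G (l₁ ++ a :: b :: l₂) (l₁ ++ (a * b * a⁻¹) :: a :: l₂)

/-- Braid equivalence of tuples: the equivalence relation generated by Hurwitz moves. -/
def BraidEquiv (G : Type*) [Group G] : List G → List G → Prop :=
  Relation.EqvGen (BraidMove G)

/-- Doubling a list: `(h₁,…,h_m) ↦ (h₁,h₁,h₂,h₂,…,h_m,h_m)`. -/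
def doubleList {α : Type*} : List α → List α
  | [] => []
  | a :: t => a :: a :: doubleList t

section Basics

variable {G : Type*} [Group G]

theorem BraidEquiv.rfl {l : List G} : BraidEquiv G l l := Relation.EqvGen.refl l

theorem BraidEquiv.symm' {l l' : List G} (h : BraidEquiv G l l') : BraidEquiv G l' l :=
  Relation.EqvGen.symm _ _ h

theorem BraidEquiv.trans' {l₁ l₂ l₃ : List G} (h : BraidEquiv G l₁ l₂)
    (h' : BraidEquiv G l₂ l₃) : BraidEquiv G l₁ l₃ :=
  Relation.EqvGen.trans _ _ _ h h'

theorem BraidMove.be {l l' : List G} (h : BraidMove G l l') : BraidEquiv G l l' :=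
  Relation.EqvGen.rel _ _ h

theorem braid_move (l₁ l₂ : List G) (a b : G) :
    BraidEquiv G (l₁ ++ a :: b :: l₂) (l₁ ++ (a * b * a⁻¹) :: a :: l₂) :=
  (BraidMove.mk l₁ l₂ a b).be

theorem braid_move' (l₁ l₂ : List G) (a b : G) :
    BraidEquiv G (l₁ ++ a :: b :: l₂) (l₁ ++ b :: (b⁻¹ * a * b) :: l₂) := by
  have h := (BraidMove.mk (G := G) l₁ l₂ b (b⁻¹ * a * b)).be
  have e : b * (b⁻¹ * a * b) * b⁻¹ = a := by group
  rw [e] at h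
  exact h.symm'

theorem BraidEquiv.append_left (c : List G) {l l' : List G} (h : BraidEquiv G l l') :
    BraidEquiv G (c ++ l) (c ++ l') := by
  induction h with
  | rel x y hxy =>
    cases hxy with
    | mk l₁ l₂ a b =>
      rw [← List.append_assoc, ← List.append_assoc]
      exact (BraidMove.mk (c ++ l₁) l₂ a b).be
  | refl x => exact .rfl
  | symm x y _ ih => exact ih.symm'
  | trans x y z _ _ ih₁ ih₂ => exact ih₁.trans' ih₂

theorem BraidEquiv.append_right (c : List G) {l l' : List G} (h : BraidEquiv G l l') :
    BraidEquiv G (l ++ c) (l' ++ c) := by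
  induction h with
  | rel x y hxy =>
    cases hxy with
    | mk l₁ l₂ a b =>
      rw [List.append_assoc, List.append_assoc, List.cons_append, List.cons_append]
      exact (BraidMove.mk l₁ (l₂ ++ c) a b).be
  | refl x => exact .rfl
  | symm x y _ ih => exact ih.symm'
  | trans x y z _ _ ih₁ ih₂ => exact ih₁.trans' ih₂

theorem BraidEquiv.cons (a : G) {l l' : List G} (h : BraidEquiv G l l') :
    BraidEquiv G (a :: l) (a :: l') := h.append_left [a]

private theorem conj_inv_self {t a : G} (ht : t * t = 1) : t * (t * a * t⁻¹) * t⁻¹ = a := by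
  have hinv : t⁻¹ = t := inv_eq_of_mul_eq_one_right ht
  rw [hinv, show t * (t * a * t) * t = (t * t) * a * (t * t) by group, ht, one_mul, mul_one]

/-- a pair of equal involutions moves right past any element, unchanged. -/
theorem braid_pair_step {t : G} (ht : t * t = 1) (c₁ c₂ : List G) (a : G) :
    BraidEquiv G (c₁ ++ t :: t :: a :: c₂) (c₁ ++ a :: t :: t :: c₂) := by
  have m₁ := braid_move (c₁ ++ [t]) c₂ t a
  have m₂ := braid_move c₁ (t :: c₂) t (t * a * t⁻¹)
  rw [conj_inv_self ht] at m₂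
  simp only [List.append_assoc, List.cons_append, List.nil_append] at m₁
  exact m₁.trans' m₂

theorem braid_pair_transport {t : G} (ht : t * t = 1) (c₁ d r : List G) :
    BraidEquiv G (c₁ ++ t :: t :: (d ++ r)) (c₁ ++ d ++ t :: t :: r) := by
  induction d generalizing c₁ with
  | nil => simpa using BraidEquiv.rfl
  | cons a d ih =>
    have h₁ := braid_pair_step ht c₁ (d ++ r) a
    have h₂ := ih (c₁ ++ [a])
    simp only [List.append_assoc, List.cons_append, List.nil_append] at h₂ ⊢
    exact h₁.trans' h₂

/-- conjugate a doubled pair by the element `s` standing directly before it. -/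
theorem braid_pair_conj_left (c₁ c₂ : List G) (s t : G) :
    BraidEquiv G (c₁ ++ s :: t :: t :: c₂) (c₁ ++ (s * t * s⁻¹) :: (s * t * s⁻¹) :: s :: c₂) := by
  have m₁ := braid_move c₁ (t :: c₂) s t
  have m₂ := braid_move (c₁ ++ [s * t * s⁻¹]) c₂ s t
  simp only [List.append_assoc, List.cons_append, List.nil_append] at m₂
  exact m₁.trans' m₂

theorem sq_conj {s t : G} (ht : t * t = 1) : (s * t * s⁻¹) * (s * t * s⁻¹) = 1 := by
  rw [show (s * t * s⁻¹) * (s * t * s⁻¹) = s * (t * t) * s⁻¹ by group, ht, mul_one,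
    mul_inv_cancel]

/-- conjugate a doubled pair of involutions by any element present elsewhere in the list. -/
theorem braid_pair_conj {t : G} (ht : t * t = 1) {s : G} (c₁ c₂ : List G)
    (hs : s ∈ c₁ ++ c₂) :
    BraidEquiv G (c₁ ++ t :: t :: c₂) (c₁ ++ (s * t * s⁻¹) :: (s * t * s⁻¹) :: c₂) := by
  rcases List.mem_append.1 hs with h | h
  · obtain ⟨d₁, d₂, rfl⟩ := List.append_of_mem h
    -- (d₁ ++ s :: d₂) ++ t :: t :: c₂
    have h₁ : BraidEquiv G ((d₁ ++ [s]) ++ t :: t :: (d₂ ++ c₂))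
        ((d₁ ++ [s]) ++ d₂ ++ t :: t :: c₂) := braid_pair_transport ht _ _ _
    have h₂ := braid_pair_conj_left d₁ (d₂ ++ c₂) s t
    have h₃ : BraidEquiv G (d₁ ++ (s * t * s⁻¹) :: (s * t * s⁻¹) :: ((s :: d₂) ++ c₂))
        (d₁ ++ (s :: d₂) ++ (s * t * s⁻¹) :: (s * t * s⁻¹) :: c₂) :=
      braid_pair_transport (sq_conj ht) _ _ _
    simp only [List.append_assoc, List.cons_append, List.nil_append] at h₁ h₂ h₃ ⊢
    exact (h₁.symm'.trans' h₂).trans' h₃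
  · obtain ⟨d₁, d₂, rfl⟩ := List.append_of_mem h
    have h₁ : BraidEquiv G (c₁ ++ t :: t :: (d₁ ++ s :: d₂))
        (c₁ ++ d₁ ++ t :: t :: (s :: d₂)) := braid_pair_transport ht _ _ _
    have h₂ := braid_pair_step ht (c₁ ++ d₁) d₂ s
    have h₃ := braid_pair_conj_left (c₁ ++ d₁) d₂ s t
    have h₄ : BraidEquiv G (c₁ ++ (s * t * s⁻¹) :: (s * t * s⁻¹) :: (d₁ ++ s :: d₂))
        (c₁ ++ d₁ ++ (s * t * s⁻¹) :: (s * t * s⁻¹) :: (s :: d₂)) :=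
      braid_pair_transport (sq_conj ht) _ _ _
    simp only [List.append_assoc, List.cons_append, List.nil_append] at h₁ h₂ h₃ h₄ ⊢
    exact ((h₁.trans' h₂).trans' h₃).trans' h₄.symm'

end Basics

section PermBasics

variable {d : ℕ}

/-- `a` and `b` lie in the same connected component of the multigraph `𝒢(ḡ)`
associated to a tuple of transpositions `ḡ` (edges of `𝒢(ḡ)` join `u` and `v`
whenever the transposition `(u v)` occurs in `ḡ`). -/
def Reach {d : ℕ} (g : List (Equiv.Perm (Fin d))) (a b : Fin d) : Prop :=
  Relation.ReflTransGen (fun u v => Equiv.swap u v ∈ g) a b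

/-- The number of entries of `l` which are transpositions of two points in the
connected component of `a` in the multigraph of `base`. -/
noncomputable def blockCount {d : ℕ} (l base : List (Equiv.Perm (Fin d))) (a : Fin d) : ℕ :=
  l.countP (fun x => decide (∀ b : Fin d, x b ≠ b → Reach base a b))

def AllSwaps {d : ℕ} (l : List (Equiv.Perm (Fin d))) : Prop := ∀ x ∈ l, x.IsSwap

theorem swap_eq_swap_cases {α : Type*} [DecidableEq α] {u v c e : α} (huv : u ≠ v)
    (h : Equiv.swap u v = Equiv.swap c e) : (u = c ∧ v = e) ∨ (u = e ∧ v = c) := by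
  have h1 : Equiv.swap c e u = v := by rw [← h]; exact Equiv.swap_apply_left u v
  rcases eq_or_ne u c with rfl | hc
  · left; refine ⟨rfl, ?_⟩; rw [Equiv.swap_apply_left] at h1; exact h1.symm
  rcases eq_or_ne u e with rfl | he
  · right; refine ⟨rfl, ?_⟩; rw [Equiv.swap_apply_right] at h1; exact h1.symm
  · rw [Equiv.swap_apply_of_ne_of_ne hc he] at h1; exact absurd h1 huv

theorem isSwap_one_false {α : Type*} [DecidableEq α] (h : Equiv.Perm.IsSwap (1 : Equiv.Perm α)) :
    False := by
  obtain ⟨x, y, hxy, heq⟩ := h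
  have := congrArg (fun f : Equiv.Perm α => f x) heq
  simp at this
  exact hxy this

theorem eq_swap_of_isSwap {t : Equiv.Perm (Fin d)} (h : t.IsSwap) {a : Fin d}
    (ha : t a ≠ a) : t = Equiv.swap a (t a) := by
  obtain ⟨x, y, hxy, rfl⟩ := h
  rcases eq_or_ne a x with rfl | hx
  · rw [Equiv.swap_apply_left]
  rcases eq_or_ne a y with rfl | hy
  · rw [Equiv.swap_apply_right]; exact Equiv.swap_comm x a
  · exact absurd (Equiv.swap_apply_of_ne_of_ne hx hy) ha

theorem Equiv.Perm.IsSwap.mul_self' {t : Equiv.Perm (Fin d)} (h : t.IsSwap) : t * t = 1 := by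
  obtain ⟨x, y, _, rfl⟩ := h; exact Equiv.swap_mul_self x y

theorem Equiv.Perm.IsSwap.inv_eq {t : Equiv.Perm (Fin d)} (h : t.IsSwap) : t⁻¹ = t :=
  inv_eq_of_mul_eq_one_right h.mul_self'

theorem Equiv.Perm.IsSwap.apply_apply {t : Equiv.Perm (Fin d)} (h : t.IsSwap) (a : Fin d) :
    t (t a) = a := by
  have := congrArg (fun f : Equiv.Perm (Fin d) => f a) h.mul_self'
  simpa using this

theorem Equiv.Perm.IsSwap.conj' {b : Equiv.Perm (Fin d)} (h : b.IsSwap) (a : Equiv.Perm (Fin d)) :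
    (a * b * a⁻¹).IsSwap := by
  obtain ⟨x, y, hxy, rfl⟩ := h
  exact ⟨a x, a y, fun hc => hxy (a.injective hc), (Equiv.swap_apply_apply a x y).symm⟩

theorem ne_of_swap_mem {l : List (Equiv.Perm (Fin d))} (hl : AllSwaps l) {a b : Fin d}
    (h : Equiv.swap a b ∈ l) : a ≠ b := by
  rintro rfl
  rw [Equiv.swap_self] at h
  exact isSwap_one_false (hl _ h)

theorem Reach.rf {g : List (Equiv.Perm (Fin d))} {a : Fin d} : Reach g a a :=
  Relation.ReflTransGen.refl

theorem Reach.symm {g : List (Equiv.Perm (Fin d))} {a b : Fin d} (h : Reach g a b) :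
    Reach g b a := by
  have hs : Symmetric (fun u v : Fin d => Equiv.swap u v ∈ g) := fun u v h => by
    show Equiv.swap v u ∈ g
    rw [Equiv.swap_comm]
    exact h
  exact (@Relation.ReflTransGen.symmetric _ _ ⟨fun a b h => hs h⟩).symm _ _ h

theorem Reach.trans' {g : List (Equiv.Perm (Fin d))} {a b c : Fin d} (h : Reach g a b)
    (h' : Reach g b c) : Reach g a c := Relation.ReflTransGen.trans h h'

theorem reach_mono' {l m : List (Equiv.Perm (Fin d))}
    (H : ∀ u v : Fin d, Equiv.swap u v ∈ l → u ≠ v → Reach m u v) {a b : Fin d}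
    (h : Reach l a b) : Reach m a b := by
  induction h with
  | refl => exact Reach.rf
  | @tail x y hab hbc ih =>
    rcases eq_or_ne x y with rfl | hne
    · exact ih
    · exact ih.trans' (H _ _ hbc hne)

theorem reach_congr_mem {l m : List (Equiv.Perm (Fin d))}
    (H : ∀ x : Equiv.Perm (Fin d), x ∈ l ↔ x ∈ m) {a b : Fin d} :
    Reach l a b ↔ Reach m a b := by
  constructor
  · exact fun h => reach_mono' (fun u v he _ => Relation.ReflTransGen.single ((H _).1 he)) h
  · exact fun h => reach_mono' (fun u v he _ => Relation.ReflTransGen.single ((H _).2 he)) h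

theorem point_conj_reach {m : List (Equiv.Perm (Fin d))} {s : Equiv.Perm (Fin d)}
    (hs : s ∈ m) (hssw : s.IsSwap) (u : Fin d) : Reach m u (s u) := by
  rcases eq_or_ne (s u) u with h | h
  · rw [h]; exact Reach.rf
  · refine Relation.ReflTransGen.single ?_
    rw [← eq_swap_of_isSwap hssw h]
    exact hs

theorem reach_of_conj_edge {m : List (Equiv.Perm (Fin d))} {s : Equiv.Perm (Fin d)}
    (hs : s ∈ m) (hssw : s.IsSwap) {u v : Fin d}
    (hedge : Equiv.swap (s u) (s v) ∈ m) : Reach m u v := by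
  have h1 : Reach m u (s u) := point_conj_reach hs hssw u
  have h2 : Reach m (s u) (s v) := Relation.ReflTransGen.single hedge
  have h3 : Reach m v (s v) := point_conj_reach hs hssw v
  exact (h1.trans' h2).trans' h3.symm

private theorem conj_cancel {G : Type*} [Group G] {s t : G} (h : s * s = 1) :
    s * (s * t * s⁻¹) * s⁻¹ = t := by
  have hinv : s⁻¹ = s := inv_eq_of_mul_eq_one_right h
  rw [hinv, show s * (s * t * s) * s = (s * s) * t * (s * s) by group, h, one_mul, mul_one]

theorem reach_step_iff {l l' : List (Equiv.Perm (Fin d))} {s t : Equiv.Perm (Fin d)}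
    (hsw : AllSwaps l) (hs : s ∈ l) (hs' : s ∈ l') (ht : t ∈ l) (ht' : s * t * s⁻¹ ∈ l')
    (hsub : ∀ x ∈ l, x = t ∨ x ∈ l') (hsub' : ∀ x ∈ l', x = s * t * s⁻¹ ∨ x ∈ l)
    (a b : Fin d) : Reach l a b ↔ Reach l' a b := by
  have hssw : s.IsSwap := hsw s hs
  have hsinv : s⁻¹ = s := hssw.inv_eq
  constructor
  · refine fun h => reach_mono' (fun u v he _ => ?_) h
    rcases hsub _ he with heq | hmem
    · refine reach_of_conj_edge hs' hssw ?_
      rw [Equiv.swap_apply_apply, heq]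
      exact ht'
    · exact Relation.ReflTransGen.single hmem
  · refine fun h => reach_mono' (fun u v he _ => ?_) h
    rcases hsub' _ he with heq | hmem
    · refine reach_of_conj_edge hs hssw ?_
      rw [Equiv.swap_apply_apply, heq, conj_cancel hssw.mul_self']
      exact ht
    · exact Relation.ReflTransGen.single hmem

theorem pred_conj_eq {base l : List (Equiv.Perm (Fin d))} {s : Equiv.Perm (Fin d)}
    (t : Equiv.Perm (Fin d))
    (hiff : ∀ u v : Fin d, Reach base u v ↔ Reach l u v)
    (hs : s ∈ l) (hssw : s.IsSwap) (a₀ : Fin d) :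
    (decide (∀ b : Fin d, t b ≠ b → Reach base a₀ b))
      = decide (∀ b : Fin d, (s * t * s⁻¹) b ≠ b → Reach base a₀ b) := by
  have hsinv : s⁻¹ = s := hssw.inv_eq
  apply decide_eq_decide.mpr
  constructor
  · intro H b hb
    have hcb : s (s b) = b := hssw.apply_apply b
    have htc : t (s b) ≠ s b := by
      intro hcc
      apply hb
      show (s * t * s⁻¹) b = b
      rw [hsinv]
      calc (s * t * s) b = s (t (s b)) := by simp [Equiv.Perm.mul_apply]
        _ = s (s b) := by rw [hcc]
        _ = b := hcb
    have h1 : Reach base a₀ (s b) := H _ htc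
    have h2 : Reach base b (s b) := (hiff _ _).mpr (point_conj_reach hs hssw b)
    exact h1.trans' h2.symm
  · intro H b hb
    have hb' : (s * t * s⁻¹) (s b) ≠ s b := by
      have he : (s * t * s⁻¹) (s b) = s (t b) := by
        rw [hsinv]
        simp [Equiv.Perm.mul_apply, hssw.apply_apply]
      rw [he]
      exact fun hcc => hb (s.injective hcc)
    have h1 : Reach base a₀ (s b) := H _ hb'
    have h2 : Reach base b (s b) := (hiff _ _).mpr (point_conj_reach hs hssw b)
    exact h1.trans' h2.symm

end PermBasics
section Invariance

variable {d : ℕ}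

local notation "P" => Equiv.Perm (Fin d)

theorem braid_invariants {l l' : List (Equiv.Perm (Fin d))}
    (h : BraidEquiv (Equiv.Perm (Fin d)) l l') :
    l.length = l'.length ∧ l.prod = l'.prod ∧ (AllSwaps l ↔ AllSwaps l') ∧
      (AllSwaps l → (∀ a b : Fin d, Reach l a b ↔ Reach l' a b) ∧
        (∀ base : List (Equiv.Perm (Fin d)),
          (∀ u v : Fin d, Reach base u v ↔ Reach l u v) →
            ∀ a : Fin d, blockCount l base a = blockCount l' base a)) := by
  induction h with
  | refl x => exact ⟨rfl, rfl, Iff.rfl, fun _ => ⟨fun a b => Iff.rfl, fun base _ a => rfl⟩⟩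
  | symm x y hxy ih =>
    obtain ⟨hL, hP, hS, hR⟩ := ih
    refine ⟨hL.symm, hP.symm, hS.symm, fun hsw' => ?_⟩
    have hsw := hS.mpr hsw'
    obtain ⟨hiff, hbc⟩ := hR hsw
    refine ⟨fun a b => (hiff a b).symm, fun base hb a => ?_⟩
    exact (hbc base (fun u v => (hb u v).trans (hiff u v).symm) a).symm
  | trans x y z hxy hyz ih₁ ih₂ =>
    obtain ⟨hL₁, hP₁, hS₁, hR₁⟩ := ih₁
    obtain ⟨hL₂, hP₂, hS₂, hR₂⟩ := ih₂
    refine ⟨hL₁.trans hL₂, hP₁.trans hP₂, hS₁.trans hS₂, fun hsw => ?_⟩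
    obtain ⟨hiff₁, hbc₁⟩ := hR₁ hsw
    obtain ⟨hiff₂, hbc₂⟩ := hR₂ (hS₁.mp hsw)
    refine ⟨fun a b => (hiff₁ a b).trans (hiff₂ a b), fun base hb a => ?_⟩
    exact (hbc₁ base hb a).trans
      (hbc₂ base (fun u v => (hb u v).trans (hiff₁ u v)) a)
  | rel x y hxy =>
    obtain ⟨l₁, l₂, s, t⟩ := hxy
    have hax : s ∈ l₁ ++ s :: t :: l₂ := by simp
    have hbx : t ∈ l₁ ++ s :: t :: l₂ := by simp
    have hay : s ∈ l₁ ++ (s * t * s⁻¹) :: s :: l₂ := by simp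
    have hconjy : s * t * s⁻¹ ∈ l₁ ++ (s * t * s⁻¹) :: s :: l₂ := by simp
    refine ⟨by simp, ?_, ?_, ?_⟩
    · simp [List.prod_append, mul_assoc]
    · constructor
      · intro hsw z hz
        simp only [List.mem_append, List.mem_cons] at hz
        rcases hz with hz | hz | hz | hz
        · exact hsw z (by simp [hz])
        · rw [hz]; exact (hsw t hbx).conj' s
        · rw [hz]; exact hsw s hax
        · exact hsw z (by simp [hz])
      · intro hsw z hz
        simp only [List.mem_append, List.mem_cons] at hz
        rcases hz with hz | hz | hz | hz
        · exact hsw z (by simp [hz])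
        · rw [hz]; exact hsw s hay
        · rw [hz]
          have hzz : t = s⁻¹ * (s * t * s⁻¹) * s⁻¹⁻¹ := by group
          rw [hzz]
          exact ((hsw _ hconjy).conj' s⁻¹)
        · exact hsw z (by simp [hz])
    · intro hsw
      have hsub : ∀ v ∈ l₁ ++ s :: t :: l₂, v = t ∨ v ∈ l₁ ++ (s * t * s⁻¹) :: s :: l₂ := by
        intro v hv
        simp only [List.mem_append, List.mem_cons] at hv ⊢
        rcases hv with hv | hv | hv | hv
        · exact Or.inr (Or.inl hv)
        · exact Or.inr (Or.inr (Or.inr (Or.inl hv)))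
        · exact Or.inl hv
        · exact Or.inr (Or.inr (Or.inr (Or.inr hv)))
      have hsub' : ∀ v ∈ l₁ ++ (s * t * s⁻¹) :: s :: l₂,
          v = s * t * s⁻¹ ∨ v ∈ l₁ ++ s :: t :: l₂ := by
        intro v hv
        simp only [List.mem_append, List.mem_cons] at hv ⊢
        rcases hv with hv | hv | hv | hv
        · exact Or.inr (Or.inl hv)
        · exact Or.inl hv
        · exact Or.inr (Or.inr (Or.inl hv))
        · exact Or.inr (Or.inr (Or.inr (Or.inr hv)))
      have hiff := reach_step_iff hsw hax hay hbx hconjy hsub hsub'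
      refine ⟨hiff, fun base hb a₀ => ?_⟩
      have hpred := pred_conj_eq (s := s) t
        (fun u v => hb u v) hax (hsw s hax) a₀
      simp only [blockCount, List.countP_append, List.countP_cons]
      rw [← hpred]
      ring
  
theorem braidEquiv_length {l l' : List (Equiv.Perm (Fin d))}
    (h : BraidEquiv (Equiv.Perm (Fin d)) l l') : l.length = l'.length :=
  (braid_invariants h).1

theorem braidEquiv_prod {l l' : List (Equiv.Perm (Fin d))}
    (h : BraidEquiv (Equiv.Perm (Fin d)) l l') : l.prod = l'.prod :=
  (braid_invariants h).2.1

theorem braidEquiv_allSwaps {l l' : List (Equiv.Perm (Fin d))}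
    (h : BraidEquiv (Equiv.Perm (Fin d)) l l') : AllSwaps l ↔ AllSwaps l' :=
  (braid_invariants h).2.2.1

theorem braidEquiv_reach {l l' : List (Equiv.Perm (Fin d))}
    (h : BraidEquiv (Equiv.Perm (Fin d)) l l') (hsw : AllSwaps l) (a b : Fin d) :
    Reach l a b ↔ Reach l' a b :=
  ((braid_invariants h).2.2.2 hsw).1 a b

theorem braidEquiv_blockCount {l l' : List (Equiv.Perm (Fin d))}
    (h : BraidEquiv (Equiv.Perm (Fin d)) l l') (hsw : AllSwaps l) (a : Fin d) :
    blockCount l l a = blockCount l' l a :=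
  ((braid_invariants h).2.2.2 hsw).2 l (fun _ _ => Iff.rfl) a

end Invariance
section Doubling

variable {d : ℕ}

theorem mem_doubleList {α : Type*} {x : α} {l : List α} : x ∈ doubleList l ↔ x ∈ l := by
  induction l with
  | nil => simp [doubleList]
  | cons a t ih => simp [doubleList, ih, or_assoc, or_self_left]

theorem length_doubleList {α : Type*} (l : List α) :
    (doubleList l).length = 2 * l.length := by
  induction l with
  | nil => simp [doubleList]
  | cons a t ih => simp [doubleList, ih]; omega

theorem countP_doubleList {α : Type*} (p : α → Bool) (l : List α) :
    (doubleList l).countP p = 2 * l.countP p := by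
  induction l with
  | nil => simp [doubleList]
  | cons a t ih => simp [doubleList, List.countP_cons, ih]; omega

theorem pair_front {G : Type*} [Group G] {t : G} (ht : t * t = 1) (c r : List G) :
    BraidEquiv G (c ++ t :: t :: r) (t :: t :: (c ++ r)) := by
  have h := braid_pair_transport ht [] c r
  simp only [List.nil_append] at h
  exact h.symm'

theorem pair_aux {x y : Fin d} (hxy : x ≠ y) :
    ∀ (j : ℕ) (m₁ : List (Equiv.Perm (Fin d))) (b : Equiv.Perm (Fin d))
      (m₂ : List (Equiv.Perm (Fin d))),
      m₁.length = j → AllSwaps (m₁ ++ b :: m₂) →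
      (m₁ ++ b :: m₂).prod = Equiv.swap x y →
      m₂.prod x = x → b x ≠ x →
      ∃ t rest, Equiv.Perm.IsSwap t ∧
        BraidEquiv (Equiv.Perm (Fin d)) (Equiv.swap x y :: (m₁ ++ b :: m₂))
          (t :: t :: rest) := by
  intro j
  induction j with
  | zero =>
    intro m₁ b m₂ hlen hsw hprod hm₂ hbx
    have hm₁ : m₁ = [] := List.eq_nil_of_length_eq_zero hlen
    subst hm₁
    simp only [List.nil_append] at hprod hsw ⊢
    have hby : b x = y := by
      have h1 := congrArg (fun f : Equiv.Perm (Fin d) => f x) hprod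
      simp only [List.prod_cons, Equiv.Perm.mul_apply, hm₂, Equiv.swap_apply_left] at h1
      exact h1
    have hb : b = Equiv.swap x y := by
      have := eq_swap_of_isSwap (hsw b (by simp)) hbx
      rwa [hby] at this
    subst hb
    exact ⟨Equiv.swap x y, m₂, ⟨x, y, hxy, rfl⟩, BraidEquiv.rfl⟩
  | succ j ih =>
    intro m₁ b m₂ hlen hsw hprod hm₂ hbx
    have hm₁ne : m₁ ≠ [] := by intro h; rw [h] at hlen; simp at hlen
    set a := m₁.getLast hm₁ne with ha_def
    have hm₁split : m₁.dropLast ++ [a] = m₁ := List.dropLast_append_getLast hm₁ne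
    set m₁' := m₁.dropLast with hm₁'_def
    have hlen' : m₁'.length = j := by
      rw [hm₁'_def, List.length_dropLast, hlen]
      omega
    have hshape : m₁ ++ b :: m₂ = m₁' ++ a :: b :: m₂ := by
      rw [← hm₁split]; simp
    have haS : a.IsSwap := hsw a (by rw [hshape]; simp)
    have hbS : b.IsSwap := hsw b (by rw [hshape]; simp)
    rcases eq_or_ne a b with rfl | hab
    · -- adjacent equal pair; move it to the front
      refine ⟨a, Equiv.swap x y :: m₁' ++ m₂, haS, ?_⟩
      have h := pair_front haS.mul_self' (Equiv.swap x y :: m₁') m₂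
      simp only [List.cons_append, List.append_assoc] at h ⊢
      rw [hshape]
      simpa using h
    rcases eq_or_ne (a x) x with hax | hax
    · -- a fixes x : forward move
      have hmv := braid_move (Equiv.swap x y :: m₁') m₂ a b
      have hres := ih m₁' (a * b * a⁻¹) (a :: m₂) hlen' ?_ ?_ ?_ ?_
      · obtain ⟨t, rest, hts, hbe⟩ := hres
        refine ⟨t, rest, hts, ?_⟩
        rw [hshape]
        refine BraidEquiv.trans' ?_ hbe
        simpa using hmv
      · intro z hz
        simp only [List.mem_append, List.mem_cons] at hz
        rcases hz with hz | hz | hz | hz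
        · exact hsw z (by rw [hshape]; simp [hz])
        · rw [hz]; exact hbS.conj' a
        · rw [hz]; exact haS
        · exact hsw z (by rw [hshape]; simp [hz])
      · rw [← hprod, hshape]
        simp [List.prod_append, List.prod_cons, mul_assoc]
      · have hainvx : a⁻¹ x = x := by
          conv_lhs => rw [← hax]
          exact a.symm_apply_apply x
        simp only [List.prod_cons, Equiv.Perm.mul_apply, hm₂, hax]
      · have hainvx : a⁻¹ x = x := by
          conv_lhs => rw [← hax]
          exact a.symm_apply_apply x
        simp only [Equiv.Perm.mul_apply, hainvx]
        intro hc
        exact hbx (a.injective (by rw [hc, hax]))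
    · -- a moves x : inverse move
      have hmv := braid_move' (Equiv.swap x y :: m₁') m₂ a b
      have hbinv : b⁻¹ = b := hbS.inv_eq
      have haz : a (b x) = b x := by
        have hbdet : b = Equiv.swap x (b x) := eq_swap_of_isSwap hbS hbx
        have hadet : a = Equiv.swap x (a x) := eq_swap_of_isSwap haS hax
        have hzw : b x ≠ a x := by
          intro hc
          apply hab
          rw [hadet, hbdet, hc]
        rw [hadet]
        exact Equiv.swap_apply_of_ne_of_ne hbx hzw
      have hres := ih m₁' b ((b⁻¹ * a * b) :: m₂) hlen' ?_ ?_ ?_ hbx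
      · obtain ⟨t, rest, hts, hbe⟩ := hres
        refine ⟨t, rest, hts, ?_⟩
        rw [hshape]
        refine BraidEquiv.trans' ?_ hbe
        simpa using hmv
      · intro z hz
        simp only [List.mem_append, List.mem_cons] at hz
        rcases hz with hz | hz | hz | hz
        · exact hsw z (by rw [hshape]; simp [hz])
        · rw [hz]; exact hbS
        · rw [hz]
          have : b⁻¹ * a * b = b⁻¹ * a * (b⁻¹)⁻¹ := by rw [inv_inv]
          rw [this]
          exact haS.conj' b⁻¹
        · exact hsw z (by rw [hshape]; simp [hz])
      · rw [← hprod, hshape]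
        simp [List.prod_append, List.prod_cons, ← mul_assoc, hbinv, hbS.mul_self']
      · simp only [List.prod_cons, Equiv.Perm.mul_apply, hm₂, hbinv, haz]
        exact hbS.apply_apply x

theorem exists_adjacent_pair {g : List (Equiv.Perm (Fin d))} (hsw : AllSwaps g)
    (hprod : g.prod = 1) (hne : g ≠ []) :
    ∃ t rest, Equiv.Perm.IsSwap t ∧
      BraidEquiv (Equiv.Perm (Fin d)) g (t :: t :: rest) := by
  obtain ⟨g₀, m, rfl⟩ := List.exists_cons_of_ne_nil hne
  obtain ⟨x, y, hxy, rfl⟩ := hsw g₀ List.mem_cons_self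
  have hm : m.prod = Equiv.swap x y := by
    have h1 : Equiv.swap x y * m.prod = 1 := by simpa [List.prod_cons] using hprod
    have h2 := congrArg (fun z => Equiv.swap x y * z) h1
    simpa [← mul_assoc, Equiv.swap_mul_self] using h2
  classical
  set Q : ℕ → Prop := fun j => (m.drop j).prod x ≠ x with hQ_def
  have hQ0 : Q 0 := by
    simp only [hQ_def, List.drop_zero, hm, Equiv.swap_apply_left]
    exact fun h => hxy h.symm
  set J := Nat.findGreatest Q m.length with hJ_def
  have hQJ : Q J := Nat.findGreatest_spec (Nat.zero_le _) hQ0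
  have hJle : J ≤ m.length := Nat.findGreatest_le _
  have hJlt : J < m.length := by
    rcases lt_or_eq_of_le hJle with h | h
    · exact h
    · exfalso; apply hQJ; rw [h, List.drop_length]; simp
  have hQJ1 : ¬ Q (J + 1) := by
    rcases eq_or_lt_of_le (Nat.succ_le_of_lt hJlt) with h | h
    · intro hq; exact hq (by rw [show J + 1 = m.length from h, List.drop_length]; simp)
    · exact Nat.findGreatest_is_greatest (Nat.lt_succ_self J) hJlt
  have hdropJ : m.drop J = m[J] :: m.drop (J + 1) := List.drop_eq_getElem_cons hJlt
  have hfix : (m.drop (J + 1)).prod x = x := by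
    by_contra hc; exact hQJ1 hc
  have hbx : m[J] x ≠ x := by
    intro hc
    apply hQJ
    rw [hdropJ, List.prod_cons, Equiv.Perm.mul_apply, hfix, hc]
  have hsplit : m = m.take J ++ m[J] :: m.drop (J + 1) := by
    rw [← hdropJ, List.take_append_drop]
  have hlenJ : (m.take J).length = J := by
    rw [List.length_take]
    omega
  have hres := pair_aux hxy J (m.take J) m[J] (m.drop (J + 1)) hlenJ ?_ ?_ hfix hbx
  · obtain ⟨t, rest, hts, hbe⟩ := hres
    refine ⟨t, rest, hts, ?_⟩
    rw [show (Equiv.swap x y :: m) = Equiv.swap x y :: (m.take J ++ m[J] :: m.drop (J + 1))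
      from by rw [← hsplit]]
    exact hbe
  · intro z hz
    apply hsw
    rw [List.mem_cons]
    right
    rw [hsplit]
    exact hz
  · rw [← hsplit]
    exact hm

theorem braid_to_double :
    ∀ (n : ℕ) (g : List (Equiv.Perm (Fin d))), g.length = n →
      AllSwaps g → g.prod = 1 →
      ∃ hs : List (Equiv.Perm (Fin d)), AllSwaps hs ∧
        BraidEquiv (Equiv.Perm (Fin d)) g (doubleList hs) := by
  intro n
  induction n using Nat.strong_induction_on with
  | _ n ih =>
    intro g hlen hsw hprod
    rcases eq_or_ne g [] with rfl | hne
    · exact ⟨[], by intro z hz; simp at hz, by exact BraidEquiv.rfl⟩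
    obtain ⟨t, rest, hts, hbe⟩ := exists_adjacent_pair hsw hprod hne
    have hswr : AllSwaps (t :: t :: rest) := (braidEquiv_allSwaps hbe).mp hsw
    have hrest_sw : AllSwaps rest := fun z hz => hswr z (by simp [hz])
    have hprod' : rest.prod = 1 := by
      have h1 := (braidEquiv_prod hbe).symm
      rw [hprod] at h1
      simp only [List.prod_cons] at h1
      rw [← mul_assoc, hts.mul_self', one_mul] at h1
      exact h1
    have hlen' : rest.length + 2 = n := by
      have := braidEquiv_length hbe
      simp only [List.length_cons] at this
      omega
    obtain ⟨hs, hhs, hbe2⟩ := ih rest.length (by omega) rest rfl hrest_sw hprod'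
    refine ⟨t :: hs, ?_, ?_⟩
    · intro z hz
      rcases List.mem_cons.mp hz with rfl | hz
      · exact hts
      · exact hhs z hz
    · show BraidEquiv (Equiv.Perm (Fin d)) g (t :: t :: doubleList hs)
      exact hbe.trans' ((hbe2.cons t).cons t)

end Doubling
section Closure

variable {d : ℕ}

theorem closure_reach_forward {g : List (Equiv.Perm (Fin d))} (hsw : AllSwaps g)
    {σ : Equiv.Perm (Fin d)} (hσ : σ ∈ Subgroup.closure {x | x ∈ g}) :
    ∀ a : Fin d, Reach g a (σ a) := by
  induction hσ using Subgroup.closure_induction with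
  | mem x hx => exact fun a => point_conj_reach hx (hsw x hx) a
  | one => intro a; show Reach g a ((1 : Equiv.Perm (Fin d)) a); simp; exact Reach.rf
  | mul x y hx hy ihx ihy =>
    intro a
    show Reach g a ((x * y) a)
    rw [Equiv.Perm.mul_apply]
    exact (ihy a).trans' (ihx (y a))
  | inv x hx ihx =>
    intro a
    have h := ihx (x⁻¹ a)
    rw [show x (x⁻¹ a) = a from x.apply_symm_apply a] at h
    exact h.symm

theorem swap_mem_closure_of_reach {g : List (Equiv.Perm (Fin d))} (hsw : AllSwaps g)
    {u v : Fin d} (huv : u ≠ v) (h : Reach g u v) :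
    Equiv.swap u v ∈ Subgroup.closure {x | x ∈ g} := by
  have key : ∀ w : Fin d, Reach g u w →
      (u = w ∨ Equiv.swap u w ∈ Subgroup.closure {x | x ∈ g}) := by
    intro w hw
    induction hw with
    | refl => exact Or.inl rfl
    | @tail b c hb hbc ih =>
      have hbc_ne : b ≠ c := ne_of_swap_mem hsw hbc
      have hbc_mem : Equiv.swap b c ∈ Subgroup.closure {x | x ∈ g} :=
        Subgroup.subset_closure hbc
      rcases eq_or_ne u c with rfl | huc
      · exact Or.inl rfl
      rcases eq_or_ne u b with rfl | hub_ne
      · exact Or.inr hbc_mem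
      · right
        have hub : Equiv.swap u b ∈ Subgroup.closure {x | x ∈ g} := ih.resolve_left hub_ne
        have hident : Equiv.swap u c =
            Equiv.swap b c * Equiv.swap u b * (Equiv.swap b c)⁻¹ := by
          rw [← Equiv.swap_apply_apply,
            Equiv.swap_apply_of_ne_of_ne hub_ne huc, Equiv.swap_apply_left]
        rw [hident]
        exact mul_mem (mul_mem hbc_mem hub) (inv_mem hbc_mem)
  rcases key v h with rfl | hm
  · exact absurd rfl huv
  · exact hm

theorem perm_mem_closure_of_reach {g : List (Equiv.Perm (Fin d))} (hsw : AllSwaps g) :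
    ∀ (n : ℕ) (σ : Equiv.Perm (Fin d)), σ.support.card = n →
      (∀ a : Fin d, Reach g a (σ a)) → σ ∈ Subgroup.closure {x | x ∈ g} := by
  intro n
  induction n using Nat.strong_induction_on with
  | _ n ih =>
    intro σ hcard hreach
    rcases eq_or_ne σ 1 with rfl | hσ
    · exact one_mem _
    obtain ⟨a, ha⟩ : ∃ a : Fin d, σ a ≠ a := by
      by_contra hcon
      push_neg at hcon
      exact hσ (Equiv.ext fun z => by rw [hcon z]; rfl)
    have hlt := Equiv.Perm.card_support_swap_mul (f := σ) (x := a) ha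
    set τ := Equiv.swap a (σ a) * σ with hτ_def
    have hτreach : ∀ b : Fin d, Reach g b (τ b) := by
      intro b
      show Reach g b (Equiv.swap a (σ a) (σ b))
      rcases eq_or_ne (σ b) a with h1 | h1
      · rw [h1, Equiv.swap_apply_left]
        exact ((show Reach g b a from h1 ▸ hreach b)).trans' (hreach a)
      rcases eq_or_ne (σ b) (σ a) with h2 | h2
      · have hba : b = a := σ.injective h2
        subst hba
        rw [h2, Equiv.swap_apply_right]
        exact Reach.rf
      · rw [Equiv.swap_apply_of_ne_of_ne h1 h2]
        exact hreach b
    have hτmem := ih τ.support.card (by rw [← hcard]; exact hlt) τ rfl hτreach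
    have hswap_mem : Equiv.swap a (σ a) ∈ Subgroup.closure {x | x ∈ g} :=
      swap_mem_closure_of_reach hsw (Ne.symm ha) (hreach a)
    have hσeq : σ = Equiv.swap a (σ a) * τ := by
      rw [hτ_def, ← mul_assoc, Equiv.swap_mul_self, one_mul]
    rw [hσeq]
    exact mul_mem hswap_mem hτmem

theorem closure_iff_reach {g : List (Equiv.Perm (Fin d))} (hsw : AllSwaps g)
    (σ : Equiv.Perm (Fin d)) :
    σ ∈ Subgroup.closure {x | x ∈ g} ↔ ∀ a : Fin d, Reach g a (σ a) :=
  ⟨fun h => closure_reach_forward hsw h,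
    fun h => perm_mem_closure_of_reach hsw σ.support.card σ rfl h⟩

end Closure
section Slide

variable {d : ℕ}

/-- One edge-slide or permutation step on lists of transpositions. -/
inductive SlideStep (d : ℕ) : List (Equiv.Perm (Fin d)) → List (Equiv.Perm (Fin d)) → Prop
  | perm {l l' : List (Equiv.Perm (Fin d))} (h : l.Perm l') : SlideStep d l l'
  | slide (l₁ l₂ : List (Equiv.Perm (Fin d))) (s t : Equiv.Perm (Fin d))
      (hs : s ∈ l₁ ++ l₂) : SlideStep d (l₁ ++ t :: l₂) (l₁ ++ (s * t * s⁻¹) :: l₂)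

/-- Equivalence of lists of transpositions generated by edge slides and permutations. -/
def SlideEquiv (d : ℕ) : List (Equiv.Perm (Fin d)) → List (Equiv.Perm (Fin d)) → Prop :=
  Relation.EqvGen (SlideStep d)

theorem SlideEquiv.rfl {l : List (Equiv.Perm (Fin d))} : SlideEquiv d l l :=
  Relation.EqvGen.refl l

theorem SlideEquiv.symm' {l l' : List (Equiv.Perm (Fin d))} (h : SlideEquiv d l l') :
    SlideEquiv d l' l := Relation.EqvGen.symm _ _ h

theorem SlideEquiv.trans' {l₁ l₂ l₃ : List (Equiv.Perm (Fin d))} (h : SlideEquiv d l₁ l₂)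
    (h' : SlideEquiv d l₂ l₃) : SlideEquiv d l₁ l₃ := Relation.EqvGen.trans _ _ _ h h'

theorem SlideStep.se {l l' : List (Equiv.Perm (Fin d))} (h : SlideStep d l l') :
    SlideEquiv d l l' := Relation.EqvGen.rel _ _ h

theorem SlideEquiv.of_perm {l l' : List (Equiv.Perm (Fin d))} (h : l.Perm l') :
    SlideEquiv d l l' := (SlideStep.perm h).se

theorem SlideEquiv.cons (e : Equiv.Perm (Fin d)) {l l' : List (Equiv.Perm (Fin d))}
    (h : SlideEquiv d l l') : SlideEquiv d (e :: l) (e :: l') := by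
  induction h with
  | rel x y hxy =>
    cases hxy with
    | perm h => exact (SlideStep.perm (h.cons e)).se
    | slide l₁ l₂ s t hs =>
      exact (SlideStep.slide (e :: l₁) l₂ s t (by
        simp only [List.cons_append, List.mem_cons]
        exact Or.inr hs)).se
  | refl x => exact SlideEquiv.rfl
  | symm x y _ ih => exact ih.symm'
  | trans x y z _ _ ih₁ ih₂ => exact ih₁.trans' ih₂

theorem slide_invariants {l l' : List (Equiv.Perm (Fin d))} (h : SlideEquiv d l l') :
    l.length = l'.length ∧ (AllSwaps l ↔ AllSwaps l') ∧
      (AllSwaps l → (∀ a b : Fin d, Reach l a b ↔ Reach l' a b) ∧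
        (∀ base : List (Equiv.Perm (Fin d)),
          (∀ u v : Fin d, Reach base u v ↔ Reach l u v) →
            ∀ a : Fin d, blockCount l base a = blockCount l' base a)) := by
  induction h with
  | refl x => exact ⟨rfl, Iff.rfl, fun _ => ⟨fun a b => Iff.rfl, fun base _ a => rfl⟩⟩
  | symm x y hxy ih =>
    obtain ⟨hL, hS, hR⟩ := ih
    refine ⟨hL.symm, hS.symm, fun hsw' => ?_⟩
    have hsw := hS.mpr hsw'
    obtain ⟨hiff, hbc⟩ := hR hsw
    refine ⟨fun a b => (hiff a b).symm, fun base hb a => ?_⟩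
    exact (hbc base (fun u v => (hb u v).trans (hiff u v).symm) a).symm
  | trans x y z hxy hyz ih₁ ih₂ =>
    obtain ⟨hL₁, hS₁, hR₁⟩ := ih₁
    obtain ⟨hL₂, hS₂, hR₂⟩ := ih₂
    refine ⟨hL₁.trans hL₂, hS₁.trans hS₂, fun hsw => ?_⟩
    obtain ⟨hiff₁, hbc₁⟩ := hR₁ hsw
    obtain ⟨hiff₂, hbc₂⟩ := hR₂ (hS₁.mp hsw)
    refine ⟨fun a b => (hiff₁ a b).trans (hiff₂ a b), fun base hb a => ?_⟩
    exact (hbc₁ base hb a).trans (hbc₂ base (fun u v => (hb u v).trans (hiff₁ u v)) a)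
  | rel x y hxy =>
    cases hxy with
    | perm h =>
      refine ⟨h.length_eq, ?_, fun hsw => ?_⟩
      · constructor
        · exact fun hs z hz => hs z (h.mem_iff.mpr hz)
        · exact fun hs z hz => hs z (h.mem_iff.mp hz)
      · refine ⟨fun a b => reach_congr_mem (fun z => h.mem_iff), fun base hb a => ?_⟩
        exact h.countP_eq _
    | slide l₁ l₂ s t hs =>
      have hsl : s ∈ l₁ ++ t :: l₂ := by
        rcases List.mem_append.1 hs with h | h
        · exact List.mem_append.2 (Or.inl h)
        · exact List.mem_append.2 (Or.inr (List.mem_cons_of_mem _ h))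
      have hsl' : s ∈ l₁ ++ (s * t * s⁻¹) :: l₂ := by
        rcases List.mem_append.1 hs with h | h
        · exact List.mem_append.2 (Or.inl h)
        · exact List.mem_append.2 (Or.inr (List.mem_cons_of_mem _ h))
      have htl : t ∈ l₁ ++ t :: l₂ := by simp
      have hconj : s * t * s⁻¹ ∈ l₁ ++ (s * t * s⁻¹) :: l₂ := by simp
      refine ⟨by simp, ?_, fun hsw => ?_⟩
      · constructor
        · intro hA z hz
          simp only [List.mem_append, List.mem_cons] at hz
          rcases hz with hz | hz | hz
          · exact hA z (by simp [hz])
          · rw [hz]; exact (hA t htl).conj' s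
          · exact hA z (by simp [hz])
        · intro hA z hz
          simp only [List.mem_append, List.mem_cons] at hz
          rcases hz with hz | hz | hz
          · exact hA z (by simp [hz])
          · rw [hz]
            have hzz : t = s⁻¹ * (s * t * s⁻¹) * s⁻¹⁻¹ := by group
            rw [hzz]
            exact (hA _ hconj).conj' s⁻¹
          · exact hA z (by simp [hz])
      · have hsub : ∀ v ∈ l₁ ++ t :: l₂, v = t ∨ v ∈ l₁ ++ (s * t * s⁻¹) :: l₂ := by
          intro v hv
          simp only [List.mem_append, List.mem_cons] at hv ⊢
          rcases hv with hv | hv | hv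
          · exact Or.inr (Or.inl hv)
          · exact Or.inl hv
          · exact Or.inr (Or.inr (Or.inr hv))
        have hsub' : ∀ v ∈ l₁ ++ (s * t * s⁻¹) :: l₂,
            v = s * t * s⁻¹ ∨ v ∈ l₁ ++ t :: l₂ := by
          intro v hv
          simp only [List.mem_append, List.mem_cons] at hv ⊢
          rcases hv with hv | hv | hv
          · exact Or.inr (Or.inl hv)
          · exact Or.inl hv
          · exact Or.inr (Or.inr (Or.inr hv))
        have hiff := reach_step_iff hsw hsl hsl' htl hconj hsub hsub'
        refine ⟨hiff, fun base hb a₀ => ?_⟩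
        have hpred := pred_conj_eq (s := s) t (fun u v => hb u v) hsl (hsw s hsl) a₀
        simp only [blockCount, List.countP_append, List.countP_cons]
        rw [← hpred]

theorem slideEquiv_allSwaps {l l' : List (Equiv.Perm (Fin d))} (h : SlideEquiv d l l') :
    AllSwaps l ↔ AllSwaps l' := (slide_invariants h).2.1

theorem slideEquiv_reach {l l' : List (Equiv.Perm (Fin d))} (h : SlideEquiv d l l')
    (hsw : AllSwaps l) (a b : Fin d) : Reach l a b ↔ Reach l' a b :=
  ((slide_invariants h).2.2 hsw).1 a b

theorem doubleList_append {α : Type*} (l l' : List α) :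
    doubleList (l ++ l') = doubleList l ++ doubleList l' := by
  induction l with
  | nil => simp [doubleList]
  | cons a t ih => simp [doubleList, ih]

theorem braid_dl_perm : ∀ {l l' : List (Equiv.Perm (Fin d))}, l.Perm l' → AllSwaps l →
    BraidEquiv (Equiv.Perm (Fin d)) (doubleList l) (doubleList l') := by
  intro l l' h
  induction h with
  | nil => exact fun _ => BraidEquiv.rfl
  | cons x h ih =>
    intro hsw
    have := ih (fun z hz => hsw z (List.mem_cons_of_mem _ hz))
    exact (this.cons x).cons x
  | swap x y l =>
    intro hsw
    have hy : (y * y : Equiv.Perm (Fin d)) = 1 := (hsw y (by simp)).mul_self'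
    show BraidEquiv (Equiv.Perm (Fin d)) (y :: y :: x :: x :: doubleList l)
      (x :: x :: y :: y :: doubleList l)
    have h₁ := braid_pair_step hy ([] : List (Equiv.Perm (Fin d))) (x :: doubleList l) x
    have h₂ := braid_pair_step hy [x] (doubleList l) x
    simp only [List.nil_append, List.cons_append] at h₁ h₂
    exact h₁.trans' h₂
  | trans h₁ h₂ ih₁ ih₂ =>
    intro hsw
    exact (ih₁ hsw).trans' (ih₂ (fun z hz => hsw z (h₁.mem_iff.mpr hz)))

theorem slide_to_braid {l l' : List (Equiv.Perm (Fin d))} (h : SlideEquiv d l l')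
    (hsw : AllSwaps l) :
    BraidEquiv (Equiv.Perm (Fin d)) (doubleList l) (doubleList l') := by
  revert hsw
  induction h with
  | refl x => exact fun _ => BraidEquiv.rfl
  | symm x y hxy ih =>
    intro hsw'
    exact (ih ((slideEquiv_allSwaps hxy).mpr hsw')).symm'
  | trans x y z hxy hyz ih₁ ih₂ =>
    intro hsw
    exact (ih₁ hsw).trans' (ih₂ ((slideEquiv_allSwaps hxy).mp hsw))
  | rel x y hxy =>
    intro hsw
    cases hxy with
    | perm h => exact braid_dl_perm h hsw
    | slide l₁ l₂ s t hs =>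
      have ht : (t * t : Equiv.Perm (Fin d)) = 1 := (hsw t (by simp)).mul_self'
      have hsdl : s ∈ doubleList l₁ ++ doubleList l₂ := by
        rcases List.mem_append.1 hs with h | h
        · exact List.mem_append.2 (Or.inl (mem_doubleList.mpr h))
        · exact List.mem_append.2 (Or.inr (mem_doubleList.mpr h))
      have h := braid_pair_conj ht (s := s) (doubleList l₁) (doubleList l₂) hsdl
      rw [doubleList_append, doubleList_append]
      show BraidEquiv (Equiv.Perm (Fin d)) (doubleList l₁ ++ doubleList (t :: l₂))
        (doubleList l₁ ++ doubleList ((s * t * s⁻¹) :: l₂))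
      exact h

end Slide
section Walks

variable {d : ℕ}

theorem edge_at_start {h : List (Equiv.Perm (Fin d))} (hsw : AllSwaps h) {u w : Fin d}
    (hr : Reach h u w) (huw : u ≠ w) : ∃ z : Fin d, Equiv.swap u z ∈ h ∧ z ≠ u := by
  rcases Relation.ReflTransGen.cases_head hr with rfl | ⟨c, hc, _⟩
  · exact absurd rfl huw
  · exact ⟨c, hc, (ne_of_swap_mem hsw hc).symm⟩

theorem reach_avoid_aux {h : List (Equiv.Perm (Fin d))} (hsw : AllSwaps h) {v w b : Fin d}
    (honly : ∀ x ∈ h, x v ≠ v → x = Equiv.swap v w) (hb : b ≠ v) :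
    ∀ (n : ℕ) (a : Fin d) (l : List (Fin d)), l.length ≤ n →
      List.Chain (fun p q => Equiv.swap p q ∈ h) a l →
      (a :: l).getLast (List.cons_ne_nil _ _) = b → a ≠ v →
      Relation.ReflTransGen (fun p q => Equiv.swap p q ∈ h ∧ p ≠ v ∧ q ≠ v) a b := by
  intro n
  induction n with
  | zero =>
    intro a l hlen hchain hlast ha
    have hnil : l = [] := List.eq_nil_of_length_eq_zero (Nat.le_zero.mp hlen)
    subst hnil
    simp only [List.getLast_singleton] at hlast
    subst hlast
    exact Relation.ReflTransGen.refl
  | succ n ih =>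
    intro a l hlen hchain hlast ha
    cases l with
    | nil =>
      simp only [List.getLast_singleton] at hlast
      subst hlast
      exact Relation.ReflTransGen.refl
    | cons c l' =>
      rw [List.Chain, List.chain_cons] at hchain
      obtain ⟨hedge, hchain'⟩ := hchain
      rcases eq_or_ne c v with rfl | hcv
      · have havmem : Equiv.swap a c ∈ h := hedge
        have haval : (Equiv.swap a c) c = a := Equiv.swap_apply_right a c
        have heq := honly _ havmem (by rw [haval]; exact ha)
        have haw : a = w := by
          rcases swap_eq_swap_cases (show a ≠ c from ha) heq with ⟨h1, h2⟩ | ⟨h1, h2⟩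
          · exact absurd h1 ha
          · exact h1
        cases l' with
        | nil =>
          rw [List.getLast_cons_cons, List.getLast_singleton] at hlast
          exact absurd hlast.symm hb
        | cons e l'' =>
          rw [List.chain_cons] at hchain'
          obtain ⟨hedge2, hchain''⟩ := hchain'
          have hce : c ≠ e := ne_of_swap_mem hsw hedge2
          have hsve : (Equiv.swap c e) c = e := Equiv.swap_apply_left c e
          have heq2 := honly _ hedge2 (by rw [hsve]; exact fun hh => hce hh.symm)
          have hew : e = w := by
            rcases swap_eq_swap_cases hce heq2 with ⟨h1, h2⟩ | ⟨h1, h2⟩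
            · exact h2
            · exact absurd h2.symm hce
          have hea : e = a := by rw [hew, ← haw]
          have hlast'' : (e :: l'').getLast (List.cons_ne_nil _ _) = b := by
            rw [List.getLast_cons_cons, List.getLast_cons_cons] at hlast
            exact hlast
          have htail := ih e l'' (by simp only [List.length_cons] at hlen; omega)
            hchain'' hlast'' (by rw [hea]; exact ha)
          rw [hea] at htail
          exact htail
      · have step : Equiv.swap a c ∈ h ∧ a ≠ v ∧ c ≠ v := ⟨hedge, ha, hcv⟩
        have htail := ih c l' (by simp only [List.length_cons] at hlen; omega) hchain'
          (by rw [List.getLast_cons_cons] at hlast; exact hlast) hcv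
        exact Relation.ReflTransGen.head step htail

theorem reach_avoid {h : List (Equiv.Perm (Fin d))} (hsw : AllSwaps h) {v w : Fin d}
    (honly : ∀ x ∈ h, x v ≠ v → x = Equiv.swap v w) {a b : Fin d}
    (ha : a ≠ v) (hb : b ≠ v) (hr : Reach h a b) :
    Relation.ReflTransGen (fun p q => Equiv.swap p q ∈ h ∧ p ≠ v ∧ q ≠ v) a b := by
  obtain ⟨l, hchain, hlast⟩ := List.exists_isChain_cons_of_relationReflTransGen hr
  exact reach_avoid_aux hsw honly hb l.length a l le_rfl hchain hlast ha

theorem walk_escape_aux {h : List (Equiv.Perm (Fin d))} (hsw : AllSwaps h) {v p b : Fin d}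
    (hall : ∀ x ∈ h, x v ≠ v → x = Equiv.swap v p) (hbv : b ≠ v) (hbp : b ≠ p) :
    ∀ (n : ℕ) (s : Fin d) (l : List (Fin d)), l.length ≤ n →
      List.Chain (fun x y => Equiv.swap x y ∈ h) s l →
      (s :: l).getLast (List.cons_ne_nil _ _) = b → (s = v ∨ s = p) →
      ∃ z : Fin d, Equiv.swap p z ∈ h ∧ z ≠ v ∧ z ≠ p := by
  intro n
  induction n with
  | zero =>
    intro s l hlen hchain hlast hs
    have hnil : l = [] := List.eq_nil_of_length_eq_zero (Nat.le_zero.mp hlen)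
    subst hnil
    simp only [List.getLast_singleton] at hlast
    rcases hs with rfl | rfl
    · exact absurd hlast.symm hbv
    · exact absurd hlast.symm hbp
  | succ n ih =>
    intro s l hlen hchain hlast hs
    cases l with
    | nil =>
      simp only [List.getLast_singleton] at hlast
      rcases hs with rfl | rfl
      · exact absurd hlast.symm hbv
      · exact absurd hlast.symm hbp
    | cons c l' =>
      rw [List.Chain, List.chain_cons] at hchain
      obtain ⟨hedge, hchain'⟩ := hchain
      by_cases hc : c = v ∨ c = p
      · exact ih c l' (by simp only [List.length_cons] at hlen; omega) hchain'
          (by rw [List.getLast_cons_cons] at hlast; exact hlast) hc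
      · push_neg at hc
        obtain ⟨hcv, hcp⟩ := hc
        rcases hs with rfl | rfl
        · exfalso
          have hsvc : (Equiv.swap s c) s = c := Equiv.swap_apply_left s c
          have heq := hall _ hedge (by rw [hsvc]; exact hcv)
          have hsc : s ≠ c := ne_of_swap_mem hsw hedge
          rcases swap_eq_swap_cases hsc heq with ⟨h1, h2⟩ | ⟨h1, h2⟩
          · exact hcp h2
          · exact hcv h2
        · exact ⟨c, hedge, hcv, hcp⟩

theorem walk_escape {h : List (Equiv.Perm (Fin d))} (hsw : AllSwaps h) {v p b : Fin d}
    (hall : ∀ x ∈ h, x v ≠ v → x = Equiv.swap v p) (hbv : b ≠ v) (hbp : b ≠ p)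
    (hr : Reach h v b) :
    ∃ z : Fin d, Equiv.swap p z ∈ h ∧ z ≠ v ∧ z ≠ p := by
  obtain ⟨l, hchain, hlast⟩ := List.exists_isChain_cons_of_relationReflTransGen hr
  exact walk_escape_aux hsw hall hbv hbp l.length v l le_rfl hchain hlast (Or.inl rfl)

end Walks
section DegreeReduction

variable {d : ℕ}

/-- Number of entries of `l` moving the point `v`. -/
noncomputable def degAt (l : List (Equiv.Perm (Fin d))) (v : Fin d) : ℕ :=
  l.countP (fun t => decide (t v ≠ v))

theorem degAt_append (l₁ l₂ : List (Equiv.Perm (Fin d))) (v : Fin d) :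
    degAt (l₁ ++ l₂) v = degAt l₁ v + degAt l₂ v := List.countP_append

theorem degAt_cons (x : Equiv.Perm (Fin d)) (l : List (Equiv.Perm (Fin d))) (v : Fin d) :
    degAt (x :: l) v = degAt l v + (if x v ≠ v then 1 else 0) := by
  simp [degAt, List.countP_cons]

theorem degAt_pos_iff {l : List (Equiv.Perm (Fin d))} {v : Fin d} :
    0 < degAt l v ↔ ∃ x ∈ l, x v ≠ v := by
  simp [degAt, List.countP_pos_iff]

theorem degAt_eq_zero_iff {l : List (Equiv.Perm (Fin d))} {v : Fin d} :
    degAt l v = 0 ↔ ∀ x ∈ l, x v = v := by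
  simp [degAt, List.countP_eq_zero]

theorem mem_of_mem_split {α : Type*} {y x : α} {l₁ l₂ : List α}
    (hy : y ∈ l₁ ++ x :: l₂) (hne : y ≠ x) : y ∈ l₁ ++ l₂ := by
  rcases List.mem_append.1 hy with hh | hh
  · exact List.mem_append.2 (Or.inl hh)
  · rcases List.mem_cons.1 hh with hh | hh
    · exact absurd hh hne
    · exact List.mem_append.2 (Or.inr hh)

theorem swap_conj_swap {v p z : Fin d} (hpv : p ≠ v) (hzv : z ≠ v) :
    Equiv.swap p z * Equiv.swap v p * (Equiv.swap p z)⁻¹ = Equiv.swap v z := by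
  rw [← Equiv.swap_apply_apply]
  congr 1
  · exact Equiv.swap_apply_of_ne_of_ne (Ne.symm hpv) (Ne.symm hzv)
  · exact Equiv.swap_apply_left p z

theorem swap_conj_swap' {v p q : Fin d} (hpv : p ≠ v) (hpq : p ≠ q) :
    Equiv.swap v q * Equiv.swap v p * (Equiv.swap v q)⁻¹ = Equiv.swap q p := by
  rw [← Equiv.swap_apply_apply]
  congr 1
  · exact Equiv.swap_apply_left v q
  · exact Equiv.swap_apply_of_ne_of_ne hpv hpq

theorem reduce_deg {v m m' : Fin d} (hmv : m ≠ v) (hm'v : m' ≠ v) (hmm' : m ≠ m') :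
    ∀ (μ : ℕ) (h : List (Equiv.Perm (Fin d))), AllSwaps h →
      Reach h v m → Reach h v m' →
      2 * degAt h v +
        (if ∀ x ∈ h, ∀ y ∈ h, x v ≠ v → y v ≠ v → x = y then 1 else 0) ≤ μ →
      1 ≤ degAt h v →
      ∃ (h₂ : List (Equiv.Perm (Fin d))) (w : Fin d),
        SlideEquiv d h h₂ ∧ degAt h₂ v = 1 ∧ Equiv.swap v w ∈ h₂ ∧ w ≠ v := by
  intro μ
  induction μ using Nat.strong_induction_on with
  | _ μ ihμ =>
    intro h hsw hrm hrm' hmeas hdeg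
    rcases eq_or_lt_of_le hdeg with hdeg1 | hdeg2
    · obtain ⟨x, hx, hpx⟩ := List.countP_pos_iff.mp (show 0 < degAt h v from hdeg)
      have hxv : x v ≠ v := of_decide_eq_true hpx
      refine ⟨h, x v, SlideEquiv.rfl, hdeg1.symm, ?_, hxv⟩
      rw [← eq_swap_of_isSwap (hsw x hx) hxv]
      exact hx
    · by_cases hAS : ∀ x ∈ h, ∀ y ∈ h, x v ≠ v → y v ≠ v → x = y
      · -- all moving entries are equal : create a second kind first
        obtain ⟨x, hx, hpx⟩ := List.countP_pos_iff.mp (show 0 < degAt h v by omega)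
        have hxv : x v ≠ v := of_decide_eq_true hpx
        set p := x v with hp_def
        have hxeq : x = Equiv.swap v p := eq_swap_of_isSwap (hsw x hx) hxv
        have hpv : p ≠ v := hxv
        obtain ⟨b, hbv, hbp, hrb⟩ : ∃ b : Fin d, b ≠ v ∧ b ≠ p ∧ Reach h v b := by
          rcases eq_or_ne m p with hmp | hmp
          · exact ⟨m', hm'v, fun hc => hmm' (by rw [hmp, ← hc]), hrm'⟩
          · exact ⟨m, hmv, hmp, hrm⟩
        have hall : ∀ y ∈ h, y v ≠ v → y = Equiv.swap v p := by
          intro y hy hyv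
          rw [hAS y hy x hx hyv hxv]
          exact hxeq
        obtain ⟨z, hz_mem, hzv, hzp⟩ := walk_escape hsw hall hbv hbp hrb
        have hmeas' : 2 * degAt h v + 1 ≤ μ := by
          rw [if_pos hAS] at hmeas
          exact hmeas
        obtain ⟨l₁, l₂, rfl⟩ := List.append_of_mem hx
        have hs_ne : Equiv.swap p z ≠ x := by
          intro hc
          rw [hxeq] at hc
          rcases swap_eq_swap_cases (Ne.symm hzp) hc with ⟨h1, h2⟩ | ⟨h1, h2⟩
          · exact hpv h1
          · exact hzv h2
        have hs_mem : Equiv.swap p z ∈ l₁ ++ l₂ := mem_of_mem_split hz_mem hs_ne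
        have step := SlideStep.slide l₁ l₂ (Equiv.swap p z) x hs_mem
        have hx'eq : Equiv.swap p z * x * (Equiv.swap p z)⁻¹ = Equiv.swap v z := by
          rw [hxeq, swap_conj_swap hpv hzv]
        rw [hx'eq] at step
        have hse := step.se
        have hsw₂ : AllSwaps (l₁ ++ Equiv.swap v z :: l₂) := (slideEquiv_allSwaps hse).mp hsw
        have hiffR := slideEquiv_reach hse hsw
        have hxtouch : x v ≠ v := hxv
        have hztouch : (Equiv.swap v z) v ≠ v := by
          rw [Equiv.swap_apply_left]
          exact hzv
        have hdeg_eq : degAt (l₁ ++ Equiv.swap v z :: l₂) v = degAt (l₁ ++ x :: l₂) v := by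
          rw [degAt_append, degAt_append, degAt_cons, degAt_cons, if_pos hztouch,
            if_pos hxtouch]
        have hrest_pos : 0 < degAt (l₁ ++ l₂) v := by
          have hd1 : degAt (l₁ ++ x :: l₂) v = degAt (l₁ ++ l₂) v + 1 := by
            rw [degAt_append, degAt_append, degAt_cons, if_pos hxtouch]
            omega
          omega
        obtain ⟨y, hy, hyv'⟩ := List.countP_pos_iff.mp hrest_pos
        have hyv : y v ≠ v := of_decide_eq_true hyv'
        have hy_in_h : y ∈ l₁ ++ x :: l₂ := by
          rcases List.mem_append.1 hy with hh | hh
          · exact List.mem_append.2 (Or.inl hh)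
          · exact List.mem_append.2 (Or.inr (List.mem_cons_of_mem _ hh))
        have hy_eq_x : y = x := hAS y hy_in_h x hx hyv hxv
        have hASfalse : ¬ (∀ a ∈ l₁ ++ Equiv.swap v z :: l₂, ∀ b ∈ l₁ ++ Equiv.swap v z :: l₂,
            a v ≠ v → b v ≠ v → a = b) := by
          intro hc
          have h1 : Equiv.swap v z ∈ l₁ ++ Equiv.swap v z :: l₂ := by simp
          have h2 : y ∈ l₁ ++ Equiv.swap v z :: l₂ := by
            rcases List.mem_append.1 hy with hh | hh
            · exact List.mem_append.2 (Or.inl hh)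
            · exact List.mem_append.2 (Or.inr (List.mem_cons_of_mem _ hh))
          have heq := hc y h2 (Equiv.swap v z) h1 hyv hztouch
          rw [hy_eq_x, hxeq] at heq
          rcases swap_eq_swap_cases (Ne.symm hpv) heq with ⟨h1', h2'⟩ | ⟨h1', h2'⟩
          · exact hzp h2'.symm
          · exact hzv h1'.symm
        obtain ⟨h₃, w, hse3, hd3, hm3, hw3⟩ := ihμ (2 * degAt (l₁ ++ x :: l₂) v)
          (by omega) (l₁ ++ Equiv.swap v z :: l₂) hsw₂ ((hiffR v m).mp hrm)
          ((hiffR v m').mp hrm')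
          (by rw [if_neg hASfalse, hdeg_eq]; omega) (by omega)
        exact ⟨h₃, w, hse.trans' hse3, hd3, hm3, hw3⟩
      · -- two distinct moving entries : slide one over the other
        push_neg at hAS
        obtain ⟨x, hx, y, hy, hxv, hyv, hxy⟩ := hAS
        set p := x v with hp_def
        set q := y v with hq_def
        have hxeq : x = Equiv.swap v p := eq_swap_of_isSwap (hsw x hx) hxv
        have hyeq : y = Equiv.swap v q := eq_swap_of_isSwap (hsw y hy) hyv
        have hpq : p ≠ q := by
          intro hc
          apply hxy
          rw [hxeq, hc, ← hyeq]
        obtain ⟨l₁, l₂, rfl⟩ := List.append_of_mem hx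
        have hy_mem : y ∈ l₁ ++ l₂ := mem_of_mem_split hy (Ne.symm hxy)
        have step := SlideStep.slide l₁ l₂ y x hy_mem
        have hx'eq : y * x * y⁻¹ = Equiv.swap q p := by
          rw [hxeq, hyeq, swap_conj_swap' hxv hpq]
        rw [hx'eq] at step
        have hse := step.se
        have hsw₂ : AllSwaps (l₁ ++ Equiv.swap q p :: l₂) :=
          (slideEquiv_allSwaps hse).mp hsw
        have hiffR := slideEquiv_reach hse hsw
        have hxtouch : x v ≠ v := hxv
        have hnotouch : ¬ ((Equiv.swap q p) v ≠ v) := by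
          rw [Equiv.swap_apply_of_ne_of_ne (Ne.symm hyv) (Ne.symm hxv)]
          exact fun hc => hc rfl
        have hdeg_eq : degAt (l₁ ++ Equiv.swap q p :: l₂) v + 1
            = degAt (l₁ ++ x :: l₂) v := by
          rw [degAt_append, degAt_append, degAt_cons, degAt_cons, if_pos hxtouch,
            if_neg hnotouch]
          omega
        have hdegpos : 1 ≤ degAt (l₁ ++ Equiv.swap q p :: l₂) v := by
          have hy2 : y ∈ l₁ ++ Equiv.swap q p :: l₂ := by
            rcases List.mem_append.1 hy_mem with hh | hh
            · exact List.mem_append.2 (Or.inl hh)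
            · exact List.mem_append.2 (Or.inr (List.mem_cons_of_mem _ hh))
          apply degAt_pos_iff.mpr
          exact ⟨y, hy2, hyv⟩
        obtain ⟨h₃, w, hse3, hd3, hm3, hw3⟩ := ihμ
          (2 * degAt (l₁ ++ Equiv.swap q p :: l₂) v + 1)
          (by omega) (l₁ ++ Equiv.swap q p :: l₂) hsw₂ ((hiffR v m).mp hrm)
          ((hiffR v m').mp hrm')
          (by split <;> omega) hdegpos
        exact ⟨h₃, w, hse.trans' hse3, hd3, hm3, hw3⟩

end DegreeReduction
section ProcessVertex

variable {d : ℕ}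

theorem slide_along {v : Fin d} (l₁ l₂ : List (Equiv.Perm (Fin d))) {m : Fin d}
    {w : Fin d}
    (hpath : Relation.ReflTransGen
      (fun p q => Equiv.swap p q ∈ (l₁ ++ l₂) ∧ p ≠ v ∧ q ≠ v) w m)
    (hwv : w ≠ v) :
    SlideEquiv d (l₁ ++ Equiv.swap v w :: l₂) (l₁ ++ Equiv.swap v m :: l₂) := by
  induction hpath using Relation.ReflTransGen.head_induction_on with
  | refl => exact SlideEquiv.rfl
  | @head a c hac htail ih =>
    obtain ⟨hedge, hav, hcv⟩ := hac
    have step := SlideStep.slide l₁ l₂ (Equiv.swap a c) (Equiv.swap v a) hedge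
    have hE : Equiv.swap a c * Equiv.swap v a * (Equiv.swap a c)⁻¹ = Equiv.swap v c := by
      rw [← Equiv.swap_apply_apply]
      congr 1
      · exact Equiv.swap_apply_of_ne_of_ne (Ne.symm hav) (Ne.symm hcv)
      · exact Equiv.swap_apply_left a c
    rw [hE] at step
    exact step.se.trans' (ih hcv)

theorem process_vertex {h : List (Equiv.Perm (Fin d))} {v m m' : Fin d} (hsw : AllSwaps h)
    (hm : m ≠ v) (hm' : m' ≠ v) (hmm' : m ≠ m') (hrm : Reach h v m) (hrm' : Reach h v m') :
    ∃ r : List (Equiv.Perm (Fin d)), SlideEquiv d h (Equiv.swap m v :: r) ∧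
      (∀ x ∈ r, x v = v) := by
  obtain ⟨z, hz, hzv⟩ := edge_at_start hsw hrm (Ne.symm hm)
  have hdeg : 1 ≤ degAt h v := degAt_pos_iff.mpr
    ⟨Equiv.swap v z, hz, by rw [Equiv.swap_apply_left]; exact hzv⟩
  obtain ⟨h₂, w, hse, hdeg2, hmem, hwv⟩ := reduce_deg hm hm' hmm'
    (2 * degAt h v + if ∀ x ∈ h, ∀ y ∈ h, x v ≠ v → y v ≠ v → x = y then 1 else 0)
    h hsw hrm hrm' le_rfl hdeg
  have hsw₂ : AllSwaps h₂ := (slideEquiv_allSwaps hse).mp hsw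
  have hiffR := slideEquiv_reach hse hsw
  obtain ⟨l₁, l₂, rfl⟩ := List.append_of_mem hmem
  have htouch : (Equiv.swap v w) v ≠ v := by
    rw [Equiv.swap_apply_left]; exact hwv
  have hothers : ∀ x ∈ l₁ ++ l₂, x v = v := by
    apply degAt_eq_zero_iff.mp
    rw [degAt_append] at hdeg2 ⊢
    rw [degAt_cons, if_pos htouch] at hdeg2
    omega
  have honly : ∀ x ∈ l₁ ++ Equiv.swap v w :: l₂, x v ≠ v → x = Equiv.swap v w := by
    intro x hx hxv
    rcases eq_or_ne x (Equiv.swap v w) with rfl | hne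
    · rfl
    · exact absurd (hothers x (mem_of_mem_split hx hne)) hxv
  have hrvw : Reach (l₁ ++ Equiv.swap v w :: l₂) v w :=
    Relation.ReflTransGen.single (by simp)
  have hrwm : Reach (l₁ ++ Equiv.swap v w :: l₂) w m :=
    hrvw.symm.trans' ((hiffR v m).mp hrm)
  have hpath0 := reach_avoid hsw₂ honly hwv hm hrwm
  have hpath : Relation.ReflTransGen
      (fun p q => Equiv.swap p q ∈ (l₁ ++ l₂) ∧ p ≠ v ∧ q ≠ v) w m := by
    refine Relation.ReflTransGen.mono ?_ _ _ hpath0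
    rintro p q ⟨hpq, hpv, hqv⟩
    refine ⟨?_, hpv, hqv⟩
    rcases eq_or_ne (Equiv.swap p q) (Equiv.swap v w) with heq | hne
    · exfalso
      have hpqne : p ≠ q := ne_of_swap_mem hsw₂ hpq
      rcases swap_eq_swap_cases hpqne heq with ⟨h1, h2⟩ | ⟨h1, h2⟩
      · exact hpv h1
      · exact hqv h2
    · exact mem_of_mem_split hpq hne
  have hslide := slide_along l₁ l₂ hpath hwv
  have hperm : SlideEquiv d (l₁ ++ Equiv.swap v m :: l₂)
      (Equiv.swap v m :: (l₁ ++ l₂)) := SlideEquiv.of_perm List.perm_middle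
  refine ⟨l₁ ++ l₂, ?_, hothers⟩
  rw [Equiv.swap_comm m v]
  exact hse.trans' (hslide.trans' hperm)

end ProcessVertex
section Comb

variable {d : ℕ}

/-- `v` has at least two distinct companions in its connected component. -/
def Strip {d : ℕ} (h : List (Equiv.Perm (Fin d))) (v : Fin d) : Prop :=
  ∃ a b : Fin d, a ≠ b ∧ a ≠ v ∧ b ≠ v ∧ Reach h v a ∧ Reach h v b

theorem bc_congr_base {l b₁ b₂ : List (Equiv.Perm (Fin d))}
    (hiff : ∀ u v : Fin d, Reach b₁ u v ↔ Reach b₂ u v) (a : Fin d) :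
    blockCount l b₁ a = blockCount l b₂ a := by
  apply List.countP_congr
  intro z hz
  simp only [decide_eq_true_eq]
  constructor
  · exact fun H b hb => (hiff a b).mp (H b hb)
  · exact fun H b hb => (hiff a b).mpr (H b hb)

theorem no_strip_comp {h : List (Equiv.Perm (Fin d))} (hnostrip : ∀ v : Fin d, ¬ Strip h v)
    {u w c : Fin d} (hw : Reach h u w) (hwu : w ≠ u) (hc : Reach h u c) :
    c = u ∨ c = w := by
  by_contra hcon
  push_neg at hcon
  exact hnostrip u ⟨w, c, fun hz => hcon.2 hz.symm, hwu, hcon.1, hw, hc⟩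

theorem entries_in_block {l h : List (Equiv.Perm (Fin d))} (hswl : AllSwaps l)
    (hiff : ∀ a b : Fin d, Reach h a b ↔ Reach l a b)
    (hnostrip : ∀ v : Fin d, ¬ Strip h v) {u w : Fin d} (hw : Reach h u w) (hwu : w ≠ u) :
    ∀ z ∈ l, ((∀ b : Fin d, z b ≠ b → Reach h u b) ↔ z = Equiv.swap u w) := by
  intro z hz
  constructor
  · intro hzpred
    obtain ⟨c, e, hce, rfl⟩ := hswl z hz
    have hc : Reach h u c := hzpred c (by rw [Equiv.swap_apply_left]; exact hce.symm)
    have he : Reach h u e := hzpred e (by rw [Equiv.swap_apply_right]; exact hce)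
    rcases no_strip_comp hnostrip hw hwu hc with rfl | rfl
    · rcases no_strip_comp hnostrip hw hwu he with rfl | rfl
      · exact absurd rfl hce
      · rfl
    · rcases no_strip_comp hnostrip hw hwu he with rfl | rfl
      · exact Equiv.swap_comm _ _
      · exact absurd rfl hce
  · rintro rfl
    intro b hb
    rcases eq_or_ne b u with rfl | hbu
    · exact Reach.rf
    rcases eq_or_ne b w with rfl | hbw
    · exact hw
    · exact absurd (Equiv.swap_apply_of_ne_of_ne hbu hbw) hb

theorem count_block {l h : List (Equiv.Perm (Fin d))} (hswl : AllSwaps l)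
    (hiff : ∀ a b : Fin d, Reach h a b ↔ Reach l a b)
    (hnostrip : ∀ v : Fin d, ¬ Strip h v) {u w : Fin d} (hw : Reach h u w) (hwu : w ≠ u) :
    List.count (Equiv.swap u w) l = blockCount l h u := by
  rw [List.count_eq_countP, blockCount]
  apply List.countP_congr
  intro z hz
  simp only [beq_iff_eq, decide_eq_true_eq]
  exact (entries_in_block hswl hiff hnostrip hw hwu z hz).symm

theorem comb_nostrip {h h' : List (Equiv.Perm (Fin d))}
    (hnostrip : ∀ v : Fin d, ¬ Strip h v)
    (hsw : AllSwaps h) (hsw' : AllSwaps h')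
    (hiff : ∀ a b : Fin d, Reach h a b ↔ Reach h' a b)
    (hbc : ∀ a : Fin d, blockCount h h a = blockCount h' h a) :
    SlideEquiv d h h' := by
  apply SlideEquiv.of_perm
  rw [List.perm_iff_count]
  intro x₀
  by_cases hx : x₀ ∈ h ∨ x₀ ∈ h'
  · have hsx : x₀.IsSwap := hx.elim (hsw x₀) (hsw' x₀)
    obtain ⟨u, w, huw, rfl⟩ := hsx
    have hr : Reach h u w := by
      rcases hx with hx | hx
      · exact Relation.ReflTransGen.single hx
      · exact (hiff u w).mpr (Relation.ReflTransGen.single hx)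
    have e1 : List.count (Equiv.swap u w) h = blockCount h h u :=
      count_block hsw (fun a b => Iff.rfl) hnostrip hr huw.symm
    have e2 : List.count (Equiv.swap u w) h' = blockCount h' h u :=
      count_block hsw' hiff hnostrip hr huw.symm
    rw [e1, e2, hbc u]
  · push_neg at hx
    rw [List.count_eq_zero.mpr hx.1, List.count_eq_zero.mpr hx.2]

/-- After processing vertex `v`, the rest `r` has `v` isolated. -/
theorem reach_isolated {r : List (Equiv.Perm (Fin d))} {v : Fin d}
    (hro : ∀ x ∈ r, x v = v) : ∀ a b : Fin d, Reach r a b → a = v → b = v := by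
  intro a b hab
  induction hab with
  | refl => exact fun hz => hz
  | @tail x y hax hedge ih =>
    intro rfl'
    have hx : x = v := ih rfl'
    subst hx
    have := hro _ hedge
    rw [Equiv.swap_apply_left] at this
    exact this

theorem reach_strip {r : List (Equiv.Perm (Fin d))} {v m : Fin d} (hmv : m ≠ v)
    (hswL : AllSwaps (Equiv.swap m v :: r)) (hro : ∀ x ∈ r, x v = v)
    {a b : Fin d} (ha : a ≠ v) (hb : b ≠ v) :
    Reach (Equiv.swap m v :: r) a b ↔ Reach r a b := by
  constructor
  · intro hr
    have honly : ∀ x ∈ Equiv.swap m v :: r, x v ≠ v → x = Equiv.swap v m := by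
      intro x hx hxv
      rcases List.mem_cons.1 hx with rfl | hx
      · exact Equiv.swap_comm m v
      · exact absurd (hro x hx) hxv
    have hpath := reach_avoid hswL honly ha hb hr
    refine Relation.ReflTransGen.mono ?_ _ _ hpath
    rintro p q ⟨hpq, hpv, hqv⟩
    rcases List.mem_cons.1 hpq with heq | hmem
    · exfalso
      have hpqne : p ≠ q := ne_of_swap_mem hswL (by rw [heq]; simp)
      rcases swap_eq_swap_cases hpqne heq with ⟨h1, h2⟩ | ⟨h1, h2⟩
      · exact hqv h2
      · exact hpv h1
    · exact hmem
  · intro hr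
    refine Relation.ReflTransGen.mono ?_ _ _ hr
    intro p q hpq
    exact List.mem_cons_of_mem _ hpq


theorem comb : ∀ (k : ℕ) (h h' : List (Equiv.Perm (Fin d))),
    (Finset.univ.filter (fun v : Fin d => Strip h v)).card ≤ k →
    AllSwaps h → AllSwaps h' →
    (∀ a b : Fin d, Reach h a b ↔ Reach h' a b) →
    (∀ a : Fin d, blockCount h h a = blockCount h' h a) →
    SlideEquiv d h h' := by
  intro k
  induction k with
  | zero =>
    intro h h' hcard hsw hsw' hiff hbc
    have hnostrip : ∀ v : Fin d, ¬ Strip h v := by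
      intro v hv
      have hmem : v ∈ Finset.univ.filter (fun v : Fin d => Strip h v) := by
        simp only [Finset.mem_filter, Finset.mem_univ, true_and]
        exact hv
      have hpos : 0 < (Finset.univ.filter (fun v : Fin d => Strip h v)).card :=
        Finset.card_pos.mpr ⟨v, hmem⟩
      omega
    exact comb_nostrip hnostrip hsw hsw' hiff hbc
  | succ k ih =>
    intro h h' hcard hsw hsw' hiff hbc
    by_cases hstrip : ∃ v : Fin d, Strip h v
    · obtain ⟨v, hv⟩ := hstrip
      have hv' := hv
      obtain ⟨a0, b0, hab0, ha0, hb0, hra0, hrb0⟩ := hv'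
      obtain ⟨r, hse, hro⟩ := process_vertex hsw ha0 hb0 hab0 hra0 hrb0
      obtain ⟨r', hse', hro'⟩ := process_vertex hsw' ha0 hb0 hab0
        ((hiff v a0).mp hra0) ((hiff v b0).mp hrb0)
      have hswL : AllSwaps (Equiv.swap a0 v :: r) := (slideEquiv_allSwaps hse).mp hsw
      have hswL' : AllSwaps (Equiv.swap a0 v :: r') := (slideEquiv_allSwaps hse').mp hsw'
      have hswr : AllSwaps r := fun z hz => hswL z (List.mem_cons_of_mem _ hz)
      have hswr' : AllSwaps r' := fun z hz => hswL' z (List.mem_cons_of_mem _ hz)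
      have hiffL : ∀ a b : Fin d, Reach h a b ↔ Reach (Equiv.swap a0 v :: r) a b :=
        slideEquiv_reach hse hsw
      have hiffL' : ∀ a b : Fin d, Reach h' a b ↔ Reach (Equiv.swap a0 v :: r') a b :=
        slideEquiv_reach hse' hsw'
      have hre : ∀ a b : Fin d, a ≠ v → b ≠ v → (Reach r a b ↔ Reach h a b) :=
        fun a b ha hb => (reach_strip ha0 hswL hro ha hb).symm.trans (hiffL a b).symm
      have hre' : ∀ a b : Fin d, a ≠ v → b ≠ v → (Reach r' a b ↔ Reach h' a b) :=
        fun a b ha hb => (reach_strip ha0 hswL' hro' ha hb).symm.trans (hiffL' a b).symm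
      have hiffr : ∀ a b : Fin d, Reach r a b ↔ Reach r' a b := by
        intro a b
        rcases eq_or_ne a v with rfl | hav
        · constructor
          · intro hrr
            have hbv : b = a := reach_isolated hro a b hrr rfl
            rw [hbv]
            exact Reach.rf
          · intro hrr
            have hbv : b = a := reach_isolated hro' a b hrr rfl
            rw [hbv]
            exact Reach.rf
        rcases eq_or_ne b v with rfl | hbv
        · constructor
          · intro hrr
            exact absurd (reach_isolated hro b a hrr.symm rfl) hav
          · intro hrr
            exact absurd (reach_isolated hro' b a hrr.symm rfl) hav
        · exact (hre a b hav hbv).trans ((hiff a b).trans (hre' a b hav hbv).symm)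
      have hbcr : ∀ a : Fin d, blockCount r r a = blockCount r' r a := by
        intro a
        rcases eq_or_ne a v with rfl | hav
        · have z1 : blockCount r r a = 0 := by
            apply List.countP_eq_zero.mpr
            intro z hz
            simp only [decide_eq_true_eq]
            intro hpred
            obtain ⟨c, e, hce, rfl⟩ := hswr z hz
            have hc : c = a := reach_isolated hro a c
              (hpred c (by rw [Equiv.swap_apply_left]; exact hce.symm)) rfl
            have he : e = a := reach_isolated hro a e
              (hpred e (by rw [Equiv.swap_apply_right]; exact hce)) rfl
            exact hce (hc.trans he.symm)
          have z2 : blockCount r' r a = 0 := by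
            apply List.countP_eq_zero.mpr
            intro z hz
            simp only [decide_eq_true_eq]
            intro hpred
            obtain ⟨c, e, hce, rfl⟩ := hswr' z hz
            have hc : c = a := reach_isolated hro a c
              (hpred c (by rw [Equiv.swap_apply_left]; exact hce.symm)) rfl
            have he : e = a := reach_isolated hro a e
              (hpred e (by rw [Equiv.swap_apply_right]; exact hce)) rfl
            exact hce (hc.trans he.symm)
          rw [z1, z2]
        · have t1 : blockCount r r a = blockCount r h a := by
            apply List.countP_congr
            intro z hz
            simp only [decide_eq_true_eq]
            constructor
            · intro H b hb
              have hbv : b ≠ v := fun hc => hb (by rw [hc]; exact hro z hz)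
              exact (hre a b hav hbv).mp (H b hb)
            · intro H b hb
              have hbv : b ≠ v := fun hc => hb (by rw [hc]; exact hro z hz)
              exact (hre a b hav hbv).mpr (H b hb)
          have t2 : blockCount r' r a = blockCount r' h a := by
            apply List.countP_congr
            intro z hz
            simp only [decide_eq_true_eq]
            constructor
            · intro H b hb
              have hbv : b ≠ v := fun hc => hb (by rw [hc]; exact hro' z hz)
              exact (hre a b hav hbv).mp (H b hb)
            · intro H b hb
              have hbv : b ≠ v := fun hc => hb (by rw [hc]; exact hro' z hz)
              exact (hre a b hav hbv).mpr (H b hb)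
          have hbcL : blockCount h h a = blockCount (Equiv.swap a0 v :: r) h a :=
            ((slide_invariants hse).2.2 hsw).2 h (fun _ _ => Iff.rfl) a
          have hbcL' : blockCount h' h a = blockCount (Equiv.swap a0 v :: r') h a :=
            ((slide_invariants hse').2.2 hsw').2 h (fun u v' => hiff u v') a
          have e3 : blockCount (Equiv.swap a0 v :: r) h a = blockCount r h a +
              (if (decide (∀ b : Fin d, (Equiv.swap a0 v) b ≠ b → Reach h a b)) = true
                then 1 else 0) := by
            simp only [blockCount, List.countP_cons]
          have e4 : blockCount (Equiv.swap a0 v :: r') h a = blockCount r' h a +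
              (if (decide (∀ b : Fin d, (Equiv.swap a0 v) b ≠ b → Reach h a b)) = true
                then 1 else 0) := by
            simp only [blockCount, List.countP_cons]
          have hfinal : blockCount r h a = blockCount r' h a := by
            have hb := hbc a
            omega
          rw [t1, t2, hfinal]
      have hrsub : ∀ p q : Fin d, Reach r p q → Reach h p q := by
        intro p q hr
        refine (hiffL p q).mpr ?_
        refine Relation.ReflTransGen.mono ?_ _ _ hr
        intro p' q' hpq
        exact List.mem_cons_of_mem _ hpq
      have hsubset : Finset.univ.filter (fun u : Fin d => Strip r u) ⊆
          (Finset.univ.filter (fun u : Fin d => Strip h u)).erase v := by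
        intro u hu
        simp only [Finset.mem_filter, Finset.mem_erase, Finset.mem_univ, true_and] at hu ⊢
        obtain ⟨x, y, hxy, hxu, hyu, hrx, hry⟩ := hu
        constructor
        · intro huv
          subst huv
          exact hxu (reach_isolated hro u x hrx rfl)
        · exact ⟨x, y, hxy, hxu, hyu, hrsub _ _ hrx, hrsub _ _ hry⟩
      have hvmem : v ∈ Finset.univ.filter (fun u : Fin d => Strip h u) := by
        simp only [Finset.mem_filter, Finset.mem_univ, true_and]
        exact hv
      have hcard' : (Finset.univ.filter (fun u : Fin d => Strip r u)).card ≤ k := by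
        have h1 := Finset.card_le_card hsubset
        rw [Finset.card_erase_of_mem hvmem] at h1
        omega
      have hrec := ih r r' hcard' hswr hswr' hiffr hbcr
      exact hse.trans' ((SlideEquiv.cons (Equiv.swap a0 v) hrec).trans' hse'.symm')
    · push_neg at hstrip
      exact comb_nostrip hstrip hsw hsw' hiff hbc

end Comb

/-- for a tuple `ḡ` of transpositions of `S_d` with product `1`:
(1) its length is even; (2) it is braid-equivalent to a tuple
`(h₁,h₁,…,h_{n'},h_{n'})` of doubled transpositions; (3) the subgroup it generates
consists exactly of the permutations preserving each connected component of the
multigraph `𝒢(ḡ)` (i.e. it is `Π_{Σ ∈ I(ḡ)} S_Σ`); (4) another such tuple `ḡ'` is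
braid-equivalent to `ḡ` iff it induces the same partition of `{1,…,d}` and the same
number of entries in each block. -/
theorem symmetricGroup_braid_orbits
    (d : ℕ) (hd : 2 ≤ d) (g : List (Equiv.Perm (Fin d)))
    (hswap : ∀ x ∈ g, x.IsSwap) (hprod : g.prod = 1) :
    Even g.length ∧
    (∃ hs : List (Equiv.Perm (Fin d)), (∀ x ∈ hs, x.IsSwap) ∧
        BraidEquiv (Equiv.Perm (Fin d)) g (doubleList hs)) ∧
    (∀ σ : Equiv.Perm (Fin d),
        σ ∈ Subgroup.closure {x | x ∈ g} ↔ ∀ a : Fin d, Reach g a (σ a)) ∧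
    (∀ g' : List (Equiv.Perm (Fin d)), (∀ x ∈ g', x.IsSwap) → g'.prod = 1 →
        g'.length = g.length →
        (BraidEquiv (Equiv.Perm (Fin d)) g g' ↔
          ((∀ a b : Fin d, Reach g a b ↔ Reach g' a b) ∧
            ∀ a : Fin d, blockCount g g a = blockCount g' g a))) := by
  have hsw : AllSwaps g := hswap
  obtain ⟨hs, hhs, hbe⟩ := braid_to_double g.length g rfl hsw hprod
  have hlen2 : g.length = 2 * hs.length := by
    rw [braidEquiv_length hbe, length_doubleList]
  refine ⟨?_, ⟨hs, hhs, hbe⟩, ?_, ?_⟩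
  · rw [hlen2]
    exact even_two_mul _
  · exact closure_iff_reach hsw
  · intro g' hswap' hprod' hlen'
    have hsw' : AllSwaps g' := hswap'
    constructor
    · intro hbeq
      exact ⟨braidEquiv_reach hbeq hsw, fun a => braidEquiv_blockCount hbeq hsw a⟩
    · rintro ⟨hiffR, hbcH⟩
      obtain ⟨hs', hhs', hbe'⟩ := braid_to_double g'.length g' rfl hsw' hprod'
      have hswdl : AllSwaps (doubleList hs) := (braidEquiv_allSwaps hbe).mp hsw
      have hswdl' : AllSwaps (doubleList hs') := (braidEquiv_allSwaps hbe').mp hsw'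
      -- Reach identifications
      have ihs : ∀ a b : Fin d, Reach hs a b ↔ Reach g a b := by
        intro a b
        have h1 : Reach hs a b ↔ Reach (doubleList hs) a b :=
          reach_congr_mem (fun x => mem_doubleList.symm)
        exact h1.trans (braidEquiv_reach hbe.symm' hswdl a b)
      have ihs' : ∀ a b : Fin d, Reach hs' a b ↔ Reach g' a b := by
        intro a b
        have h1 : Reach hs' a b ↔ Reach (doubleList hs') a b :=
          reach_congr_mem (fun x => mem_doubleList.symm)
        exact h1.trans (braidEquiv_reach hbe'.symm' hswdl' a b)
      have hiffhs : ∀ a b : Fin d, Reach hs a b ↔ Reach hs' a b := by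
        intro a b
        exact ((ihs a b).trans ((hiffR a b).trans (ihs' a b).symm)).trans (Iff.rfl)
      -- blockCount identification
      have hbchs : ∀ a : Fin d, blockCount hs hs a = blockCount hs' hs a := by
        intro a
        have c1 : blockCount hs hs a = blockCount hs g a :=
          bc_congr_base (fun u v => ihs u v) a
        have c2 : blockCount (doubleList hs) g a = 2 * blockCount hs g a :=
          countP_doubleList _ _
        have c3 : blockCount g g a = blockCount (doubleList hs) g a :=
          ((braid_invariants hbe).2.2.2 hsw).2 g (fun _ _ => Iff.rfl) a
        have c4 : blockCount g' g a = blockCount (doubleList hs') g a :=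
          ((braid_invariants hbe').2.2.2 hsw').2 g (fun u v => hiffR u v) a
        have c5 : blockCount (doubleList hs') g a = 2 * blockCount hs' g a :=
          countP_doubleList _ _
        have c6 : blockCount hs' g a = blockCount hs' hs a :=
          bc_congr_base (fun u v => (ihs u v).symm) a
        have hb := hbcH a
        omega
      have hcomb := comb (Finset.univ.filter (fun v : Fin d => Strip hs v)).card
        hs hs' le_rfl hhs hhs' hiffhs hbchs
      have hbdl : BraidEquiv (Equiv.Perm (Fin d)) (doubleList hs) (doubleList hs') :=
        slide_to_braid hcomb hhs
      exact (hbe.trans' hbdl).trans' hbe'.symm'
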